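/- Let f : [0,∞) → ℝ be locally Lipschitz (hence differentiable almost everywhere) and let C ∈ ℝ. (1) If f′(t) ≤ 0 for almost every t in the upper level set {t ∈ [0,∞) : f(t) > C}, then f(t) ≤ max{f(0), C} for all t ∈ [0,∞). (2) If f′(t) ≥ 0 for almost every t in the lower level set {t ∈ [0,∞) : f(t) < C}, then f(t) ≥ min{f(0), C} for all t ∈ [0,∞). -/

import Mathlib

open Real Finset Filter

/-- `y i = coth r i`. -/
noncomputable def yc (r : Fin 4 → ℝ) (i : Fin 4) : ℝ := Real.cosh (r i) / Real.sinh (r i)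

/-- The quantity `Q(r)` whose positivity characterizes non-degenerate hyperbolic tetrahedra. -/
noncomputable def Qh (r : Fin 4 → ℝ) : ℝ :=
  (∑ i, yc r i) ^ 2 - 2 * ∑ i, (yc r i) ^ 2 + 4

/-- The set of real ball packings of a tetrahedron. -/
noncomputable def OmegaSet : Set (Fin 4 → ℝ) := {r | (∀ i, 0 < r i) ∧ 0 < Qh r}

/-- The `i`-th virtual tetrahedron space `Dᵢ`. -/
noncomputable def Dset (i : Fin 4) : Set (Fin 4 → ℝ) :=
  {r | (∀ m, 0 < r m) ∧
    (∑ j ∈ Finset.univ.erase i, yc r j)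
      + 2 * Real.sqrt (((∑ j ∈ Finset.univ.erase i, yc r j) ^ 2
          - ∑ j ∈ Finset.univ.erase i, (yc r j) ^ 2) / 2 + 1) ≤ yc r i}

/-- The dihedral angle `β i j` of the hyperbolic tetrahedron determined by `r`. -/
noncomputable def betaAngle (r : Fin 4 → ℝ) (i j : Fin 4) : ℝ :=
  Real.arccos
    ((Real.sinh (r i) * Real.sinh (r j)
        * Real.sqrt (∏ m ∈ (Finset.univ.erase i).erase j, Real.sinh (r m)))
      / (4 * Real.sqrt (∏ m ∈ (Finset.univ.erase i).erase j, Real.sinh (r i + r j + r m)))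
      * (Qh r - (yc r i + yc r j) ^ 2
          + ((∑ m ∈ (Finset.univ.erase i).erase j, yc r m) ^ 2
              - 4 * ∏ m ∈ (Finset.univ.erase i).erase j, yc r m)))

/-- The solid angle `αᵢ` of the hyperbolic tetrahedron determined by `r`. -/
noncomputable def solidAngle (r : Fin 4 → ℝ) (i : Fin 4) : ℝ :=
  (∑ j ∈ Finset.univ.erase i, betaAngle r i j) - Real.pi

open Classical in
/-- The extended solid angle `α̃ᵢ`. -/
noncomputable def tildeAlpha (r : Fin 4 → ℝ) (i : Fin 4) : ℝ :=
  if r ∈ OmegaSet then solidAngle r i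
  else if r ∈ Dset i then 2 * Real.pi else 0

/-- Given a ball packing `r` on the vertex set `Fin N`, a vertex `i` and a tetrahedron `s`
containing `i`, the associated local packing in `(0,∞)⁴`, with the radius of `i` first. -/
noncomputable def localPacking {N : ℕ} (r : Fin N → ℝ) (i : Fin N) (s : Finset (Fin N)) :
    Fin 4 → ℝ :=
  fun m => if m = 0 then r i
    else r (((s.erase i).sort (· ≤ ·)).getD (m.val - 1) i)

/-- The extended combinatorial scalar curvature `K̃ᵢ(r)`. -/
noncomputable def Ktilde {N : ℕ} (T3 : Multiset (Finset (Fin N))) (r : Fin N → ℝ)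
    (i : Fin N) : ℝ :=
  4 * Real.pi -
    ((T3.filter (fun s => i ∈ s)).map (fun s => tildeAlpha (localPacking r i s) 0)).sum

/-- The tetra-degree of the vertex `i`. -/
def tetraDegree {N : ℕ} (T3 : Multiset (Finset (Fin N))) (i : Fin N) : ℕ :=
  (T3.filter (fun s => i ∈ s)).card

/-- `R` is a solution of the extended combinatorial Yamabe flow on the time domain `S`. -/
def IsExtYamabeFlowSolution {N : ℕ} (T3 : Multiset (Finset (Fin N)))
    (R : ℝ → Fin N → ℝ) (S : Set ℝ) : Prop :=
  (∀ t ∈ S, ∀ i, 0 < R t i) ∧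
  ∀ t ∈ S, ∀ i, HasDerivWithinAt (fun u => R u i)
      (-(Ktilde T3 (R t) i) * Real.sinh (R t i)) S t

open MeasureTheory Set

lemma lip_glue {f : ℝ → ℝ} {K K' : NNReal} {a x b : ℝ}
    (h1 : LipschitzOnWith K f (Set.Icc a x)) (h2 : LipschitzOnWith K' f (Set.Icc x b))
    (hax : a ≤ x) (hxb : x ≤ b) :
    LipschitzOnWith (max K K') f (Set.Icc a b) := by
  rw [lipschitzOnWith_iff_dist_le_mul] at h1 h2 ⊢
  have hK : (K : ℝ) ≤ (max K K' : NNReal) := by exact_mod_cast le_max_left K K'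
  have hK' : (K' : ℝ) ≤ (max K K' : NNReal) := by exact_mod_cast le_max_right K K'
  have key : ∀ u ∈ Set.Icc a b, ∀ v ∈ Set.Icc a b, u ≤ v →
      dist (f u) (f v) ≤ ((max K K' : NNReal) : ℝ) * dist u v := by
    intro u hu v hv huv
    rcases le_total v x with hvx | hvx
    · exact (h1 u ⟨hu.1, huv.trans hvx⟩ v ⟨hv.1, hvx⟩).trans
        (mul_le_mul_of_nonneg_right hK dist_nonneg)
    · rcases le_total x u with hxu | hxu
      · exact (h2 u ⟨hxu, hu.2⟩ v ⟨hxu.trans huv, hv.2⟩).trans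
          (mul_le_mul_of_nonneg_right hK' dist_nonneg)
      · have d1 := h1 u ⟨hu.1, hxu⟩ x ⟨hax, le_rfl⟩
        have d2 := h2 x ⟨le_rfl, hxb⟩ v ⟨hvx, hv.2⟩
        have e1 : dist u x = x - u := by rw [Real.dist_eq, abs_of_nonpos (by linarith)]; ring
        have e2 : dist x v = v - x := by rw [Real.dist_eq, abs_of_nonpos (by linarith)]; ring
        have e3 : dist u v = v - u := by rw [Real.dist_eq, abs_of_nonpos (by linarith)]; ring
        have := dist_triangle (f u) (f x) (f v)
        have hKnn : (0:ℝ) ≤ ((max K K' : NNReal) : ℝ) := NNReal.coe_nonneg _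
        rw [e1] at d1; rw [e2] at d2; rw [e3]
        nlinarith
  intro u hu v hv
  rcases le_total u v with h | h
  · exact key u hu v hv h
  · rw [dist_comm, dist_comm u v]; exact key v hv u hu h

lemma lip_interval (f : ℝ → ℝ)
    (hlip : ∀ t ∈ Set.Ici (0:ℝ), ∃ K : NNReal, ∃ ε > 0,
      LipschitzOnWith K f (Set.Ici 0 ∩ Metric.ball t ε)) :
    ∀ b : ℝ, 0 ≤ b → ∃ K : NNReal, LipschitzOnWith K f (Set.Icc 0 b) := by
  intro b hb
  set A := {x : ℝ | x ∈ Set.Icc 0 b ∧ ∃ K : NNReal, LipschitzOnWith K f (Set.Icc 0 x)} with hA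
  have h0A : (0:ℝ) ∈ A := by
    refine ⟨⟨le_rfl, hb⟩, 1, ?_⟩
    rw [lipschitzOnWith_iff_dist_le_mul]
    intro u hu v hv
    rw [Set.Icc_self, Set.mem_singleton_iff] at hu hv
    subst hu; subst hv; simp
  have hbdd : BddAbove A := ⟨b, fun x hx => hx.1.2⟩
  set c := sSup A with hc
  have hc0 : 0 ≤ c := le_csSup hbdd h0A
  have hcb : c ≤ b := csSup_le ⟨0, h0A⟩ fun x hx => hx.1.2
  obtain ⟨K', ε, hε, hlipc⟩ := hlip c hc0
  obtain ⟨x, hxA, hx⟩ := exists_lt_of_lt_csSup ⟨0, h0A⟩ (show c - ε < c by linarith)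
  obtain ⟨KA, hKA⟩ := hxA.2
  have hxc : x ≤ c := le_csSup hbdd hxA
  set m := min (c + ε/2) b with hm
  have hxm : x ≤ m := le_min (by linarith) hxA.1.2
  have hlip2 : LipschitzOnWith K' f (Set.Icc x m) := by
    refine hlipc.mono fun y hy => ⟨hxA.1.1.trans hy.1, ?_⟩
    rw [Metric.mem_ball, Real.dist_eq, abs_lt]
    have hy2 : y ≤ c + ε/2 := hy.2.trans (min_le_left _ _)
    constructor <;> [linarith [hy.1]; linarith]
  have hmA : m ∈ A :=
    ⟨⟨hxA.1.1.trans hxm, min_le_right _ _⟩, max KA K', lip_glue hKA hlip2 hxA.1.1 hxm⟩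
  rcases le_total (c + ε/2) b with h | h
  · exfalso
    have := le_csSup hbdd hmA
    rw [hm, min_eq_left h] at this
    linarith
  · rw [hm, min_eq_right h] at hmA
    exact hmA.2

lemma key_dec {g : ℝ → ℝ} {K : NNReal} {a b : ℝ} (hab : a ≤ b)
    (hg : LipschitzOnWith K g (Set.Icc a b))
    (hder : ∀ᵐ x ∂volume, x ∈ Set.Ioo a b → ∀ d, HasDerivAt g d x → d ≤ 0) :
    g b ≤ g a := by
  rcases eq_or_lt_of_le hab with rfl | hab'
  · exact le_rfl
  set c : ℝ → ℝ := fun y => max a (min y b) with hcdef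
  have hclip : LipschitzWith 1 c := by
    rw [lipschitzWith_iff_dist_le_mul]
    intro u v
    simp only [Real.dist_eq, NNReal.coe_one, one_mul, hcdef]
    calc |max a (min u b) - max a (min v b)| = |min u b ⊔ a - min v b ⊔ a| := by
          rw [max_comm a, max_comm a]
      _ ≤ |min u b - min v b| := abs_max_sub_max_le_abs _ _ _
      _ ≤ max |u - v| |b - b| := abs_min_sub_min_le_max _ _ _ _
      _ = |u - v| := by simp [abs_nonneg]
  have hcmap : Set.MapsTo c Set.univ (Set.Icc a b) :=
    fun y _ => ⟨le_max_left _ _, max_le hab (min_le_right _ _)⟩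
  have htlip : LipschitzWith K (g ∘ c) := by
    rw [← lipschitzOnWith_univ]
    simpa using hg.comp (hclip.lipschitzOnWith (s := Set.univ)) hcmap
  set gt : ℝ → ℝ := g ∘ c with hgt
  set h : ℝ → ℝ := fun y => (K : ℝ) * y - gt y with hh
  have hmono : Monotone h := by
    intro u v huv
    have := htlip.dist_le_mul u v
    rw [Real.dist_eq, Real.dist_eq] at this
    have h1 : |gt u - gt v| ≤ (K:ℝ) * |u - v| := this
    have h2 : |u - v| = v - u := by rw [abs_of_nonpos (by linarith)]; ring
    rw [h2] at h1
    have := abs_le.1 h1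
    simp only [hh]
    nlinarith [this.1, this.2]
  have hcont : Continuous h := by
    have : Continuous gt := htlip.continuous
    fun_prop
  have hse : ∀ y, hmono.stieltjesFunction y = h y := by
    intro y
    rw [hmono.stieltjesFunction_eq]
    exact rightLim_eq_of_tendsto (h := nhdsGT_neBot y)
      ((hcont.tendsto y).mono_left nhdsWithin_le_nhds)
  set μ := hmono.stieltjesFunction.measure with hμ
  have hae : ∀ᵐ x ∂volume, x ∈ Set.Ioo a b → (K : ENNReal) ≤ μ.rnDeriv volume x := by
    filter_upwards [hmono.ae_hasDerivAt, hder, Measure.rnDeriv_lt_top μ volume]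
      with x hx hd hlt hmem
    set ρ := (μ.rnDeriv volume x).toReal with hρ
    have hgtd : HasDerivAt gt ((K:ℝ) * 1 - ρ) x := by
      have h1 : HasDerivAt (fun y => (K:ℝ) * y) ((K:ℝ) * 1) x := (hasDerivAt_id x).const_mul _
      have h2 := h1.sub hx
      have he : (fun y => (K:ℝ) * y - h y) = gt := by
        funext y; simp only [hh]; ring
      rw [← he]; exact h2
    have hgd : HasDerivAt g ((K:ℝ) * 1 - ρ) x := by
      refine hgtd.congr_of_eventuallyEq ?_
      filter_upwards [isOpen_Ioo.mem_nhds hmem] with y hy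
      simp only [hgt, hcdef, Function.comp_apply, min_eq_left hy.2.le, max_eq_right hy.1.le]
    have hd0 := hd hmem _ hgd
    have hKρ : (K : ℝ) ≤ ρ := by nlinarith
    calc (K : ENNReal) = ENNReal.ofReal (K : ℝ) := ENNReal.ofReal_coe_nnreal.symm
      _ ≤ ENNReal.ofReal ρ := ENNReal.ofReal_le_ofReal hKρ
      _ = μ.rnDeriv volume x := by rw [hρ, ENNReal.ofReal_toReal hlt.ne]
  have big : ENNReal.ofReal ((K:ℝ) * (b - a)) ≤ ENNReal.ofReal (h b - h a) := by
    calc ENNReal.ofReal ((K:ℝ) * (b - a))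
        = (K : ENNReal) * volume (Set.Ioo a b) := by
          rw [ENNReal.ofReal_mul K.coe_nonneg, ENNReal.ofReal_coe_nnreal, Real.volume_Ioo]
      _ = ∫⁻ _ in Set.Ioo a b, (K : ENNReal) ∂volume := by rw [setLIntegral_const]
      _ ≤ ∫⁻ x in Set.Ioo a b, μ.rnDeriv volume x ∂volume :=
          lintegral_mono_ae ((ae_restrict_iff' measurableSet_Ioo).2 hae)
      _ = volume.withDensity (μ.rnDeriv volume) (Set.Ioo a b) :=
          (withDensity_apply _ measurableSet_Ioo).symm
      _ ≤ μ (Set.Ioo a b) := Measure.withDensity_rnDeriv_le μ volume _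
      _ ≤ μ (Set.Ioc a b) := measure_mono Set.Ioo_subset_Ioc_self
      _ = ENNReal.ofReal (hmono.stieltjesFunction b - hmono.stieltjesFunction a) :=
          hmono.stieltjesFunction.measure_Ioc a b
      _ = ENNReal.ofReal (h b - h a) := by rw [hse, hse]
  have hba : (K:ℝ) * (b - a) ≤ h b - h a :=
    (ENNReal.ofReal_le_ofReal_iff (by linarith [hmono hab])).1 big
  have hca : c a = a := by simp [hcdef, min_eq_left hab, max_eq_right (le_refl a)]
  have hcb : c b = b := by simp [hcdef, min_eq_left (le_refl b), max_eq_right hab]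
  have ha' : gt a = g a := by simp [hgt, hca]
  have hb' : gt b = g b := by simp [hgt, hcb]
  simp only [hh, ha', hb'] at hba
  nlinarith

lemma aux_max (f : ℝ → ℝ) (C : ℝ)
    (hlipI : ∀ b : ℝ, 0 ≤ b → ∃ K : NNReal, LipschitzOnWith K f (Set.Icc 0 b))
    (hd : ∀ᵐ t ∂volume, 0 ≤ t → C < f t → ∀ d, HasDerivAt f d t → d ≤ 0) :
    ∀ t, 0 ≤ t → f t ≤ max (f 0) C := by
  intro t ht
  by_contra hcon
  push_neg at hcon
  obtain ⟨K, hK⟩ := hlipI t ht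
  set M := max (f 0) C with hM
  have hcont : ContinuousOn f (Set.Icc 0 t) := hK.continuousOn
  set B := {s : ℝ | s ∈ Set.Icc 0 t ∧ f s ≤ M} with hB
  have h0B : (0:ℝ) ∈ B := ⟨⟨le_rfl, ht⟩, le_max_left _ _⟩
  have hBc : IsClosed B := by
    have : B = Set.Icc 0 t ∩ f ⁻¹' Set.Iic M := by
      ext s; simp [hB, Set.mem_Iic]
    rw [this]
    exact hcont.preimage_isClosed_of_isClosed isClosed_Icc isClosed_Iic
  have hbdd : BddAbove B := ⟨t, fun x hx => hx.1.2⟩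
  set a := sSup B with ha
  have haB : a ∈ B := hBc.csSup_mem ⟨0, h0B⟩ hbdd
  have hat : a ≤ t := haB.1.2
  have ha0 : 0 ≤ a := haB.1.1
  have hgt : ∀ s, a < s → s ≤ t → M < f s := by
    intro s hs hst
    by_contra hns
    push_neg at hns
    exact absurd (le_csSup hbdd ⟨⟨ha0.trans hs.le, hst⟩, hns⟩) (not_le.2 hs)
  have hder : ∀ᵐ x ∂volume, x ∈ Set.Ioo a t → ∀ d, HasDerivAt f d x → d ≤ 0 := by
    filter_upwards [hd] with x hx hmem
    exact hx (ha0.trans hmem.1.le) ((le_max_right _ _).trans_lt (hgt x hmem.1 hmem.2.le))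
  have := key_dec hat (hK.mono (Set.Icc_subset_Icc ha0 le_rfl)) hder
  have := haB.2
  linarith


/-- maximum/minimum principle for locally Lipschitz functions on `[0,∞)`. -/
theorem stmt10 (f : ℝ → ℝ) (C : ℝ)
    (hlip : ∀ t ∈ Set.Ici (0:ℝ), ∃ K : NNReal, ∃ ε > 0,
      LipschitzOnWith K f (Set.Ici 0 ∩ Metric.ball t ε)) :
    ((∀ᵐ t ∂MeasureTheory.volume, 0 ≤ t → C < f t → ∀ d, HasDerivAt f d t → d ≤ 0) →
      ∀ t, 0 ≤ t → f t ≤ max (f 0) C) ∧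
    ((∀ᵐ t ∂MeasureTheory.volume, 0 ≤ t → f t < C → ∀ d, HasDerivAt f d t → 0 ≤ d) →
      ∀ t, 0 ≤ t → min (f 0) C ≤ f t) := by
  have hlipI := lip_interval f hlip
  constructor
  · intro hd t ht
    exact aux_max f C hlipI hd t ht
  · intro hd t ht
    have hlipN : ∀ b : ℝ, 0 ≤ b → ∃ K : NNReal, LipschitzOnWith K (-f) (Set.Icc 0 b) :=
      fun b hb => (hlipI b hb).imp fun K h => h.neg
    have hdN : ∀ᵐ s ∂volume, 0 ≤ s → -C < (-f) s → ∀ d, HasDerivAt (-f) d s → d ≤ 0 := by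
      filter_upwards [hd] with s hs h0 hC d hder
      have hf : HasDerivAt f (-d) s := by
        have := hder.neg
        simpa using this
      have hfs : f s < C := by simpa [Pi.neg_apply] using hC
      have := hs h0 hfs _ hf
      linarith
    have := aux_max (-f) (-C) hlipN hdN t ht
    simp only [Pi.neg_apply] at this
    rw [max_neg_neg] at this
    linarith
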